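/- With the same axiomatics as in the previous statement (functors H_{I,W}, coalescence isomorphisms χ_ζ functorial in W, Γ^J-equivariant, and compatible with composition), the excursion operators satisfy the product relation: S_{I_1 ∪ I_2, W_1 ⊠ W_2, x_1 ⊗ x_2, ξ_1 ⊗ ξ_2, (γ^1_i)×(γ^2_i)} = S_{I_1, W_1, x_1, ξ_1, (γ^1_i)} ∘ S_{I_2, W_2, x_2, ξ_2, (γ^2_i)}. In particular the excursion operators generate a commutative subalgebra of End(H_{\{0\},1}). -/

import Mathlib

open TensorProduct

/-- The abstract data underlying Lafforgue's excursion construction: for every finite set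
(type) `I` and every representation `ρ` of `Ĝ^I` on a vector space `W`, a space `H I W ρ`
(the Hecke-finite cohomology `H_{I,W}`), functorially in `W` (via `map`), carrying an action
of `Γ^I` (via `gal`), together with coalescence isomorphisms `χ_ζ` (via `chi`) for every map
of index sets `ζ : I → J`, functorial in `W`, `Γ^J`-equivariant via the diagonal
`Γ^J → Γ^I`, and compatible with composition of the `ζ`'s. -/
structure ExcursionData (E : Type) [Field E] (G : Type) [Group G] (Γ : Type) [Group Γ] where
  /-- the spaces `H_{I,W}` -/
  H : (I : Type) → (W : Type) → [AddCommGroup W] → [Module E W] →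
      ((I → G) → Module.End E W) → ModuleCat E
  /-- functoriality in `W`: the maps `H(u)` for `Ĝ^I`-equivariant `u` -/
  map : {I : Type} → {W W' : Type} → [AddCommGroup W] → [Module E W] →
      [AddCommGroup W'] → [Module E W'] →
      (ρ : (I → G) → Module.End E W) → (ρ' : (I → G) → Module.End E W') →
      (u : W →ₗ[E] W') → (∀ g : I → G, u ∘ₗ ρ g = ρ' g ∘ₗ u) →
      (H I W ρ →ₗ[E] H I W' ρ')
  /-- the action of `Γ^I` on `H_{I,W}` -/
  gal : {I : Type} → {W : Type} → [AddCommGroup W] → [Module E W] →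
      (ρ : (I → G) → Module.End E W) → (I → Γ) → (H I W ρ →ₗ[E] H I W ρ)
  /-- the coalescence isomorphisms `χ_ζ : H_{I,W} ≅ H_{J,W^ζ}` -/
  chi : {I J : Type} → {W : Type} → [AddCommGroup W] → [Module E W] →
      (ρ : (I → G) → Module.End E W) → (ζ : I → J) →
      (H I W ρ ≃ₗ[E] H J W (fun h => ρ (fun i => h (ζ i))))
  map_id : ∀ {I W : Type} [AddCommGroup W] [Module E W]
      (ρ : (I → G) → Module.End E W) (hu : ∀ g : I → G, LinearMap.id ∘ₗ ρ g = ρ g ∘ₗ LinearMap.id),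
      map ρ ρ LinearMap.id hu = LinearMap.id
  map_comp : ∀ {I W W' W'' : Type} [AddCommGroup W] [Module E W] [AddCommGroup W']
      [Module E W'] [AddCommGroup W''] [Module E W'']
      (ρ : (I → G) → Module.End E W) (ρ' : (I → G) → Module.End E W')
      (ρ'' : (I → G) → Module.End E W'')
      (u : W →ₗ[E] W') (u' : W' →ₗ[E] W'')
      (hu : ∀ g, u ∘ₗ ρ g = ρ' g ∘ₗ u) (hu' : ∀ g, u' ∘ₗ ρ' g = ρ'' g ∘ₗ u')
      (hu'' : ∀ g, (u' ∘ₗ u) ∘ₗ ρ g = ρ'' g ∘ₗ (u' ∘ₗ u)),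
      map ρ ρ'' (u' ∘ₗ u) hu'' = (map ρ' ρ'' u' hu') ∘ₗ (map ρ ρ' u hu)
  gal_one : ∀ {I W : Type} [AddCommGroup W] [Module E W]
      (ρ : (I → G) → Module.End E W), gal ρ (fun _ => (1 : Γ)) = LinearMap.id
  gal_mul : ∀ {I W : Type} [AddCommGroup W] [Module E W]
      (ρ : (I → G) → Module.End E W) (γ γ' : I → Γ),
      gal ρ (γ * γ') = (gal ρ γ) ∘ₗ (gal ρ γ')
  map_gal : ∀ {I W W' : Type} [AddCommGroup W] [Module E W] [AddCommGroup W'] [Module E W']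
      (ρ : (I → G) → Module.End E W) (ρ' : (I → G) → Module.End E W')
      (u : W →ₗ[E] W') (hu : ∀ g, u ∘ₗ ρ g = ρ' g ∘ₗ u) (γ : I → Γ),
      (map ρ ρ' u hu) ∘ₗ gal ρ γ = gal ρ' γ ∘ₗ (map ρ ρ' u hu)
  chi_map : ∀ {I J : Type} {W W' : Type} [AddCommGroup W] [Module E W] [AddCommGroup W']
      [Module E W'] (ρ : (I → G) → Module.End E W) (ρ' : (I → G) → Module.End E W')
      (ζ : I → J) (u : W →ₗ[E] W') (hu : ∀ g, u ∘ₗ ρ g = ρ' g ∘ₗ u)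
      (hu' : ∀ h : J → G, u ∘ₗ ρ (fun i => h (ζ i)) = ρ' (fun i => h (ζ i)) ∘ₗ u),
      (chi ρ' ζ).toLinearMap ∘ₗ map ρ ρ' u hu =
        (map (fun h => ρ (fun i => h (ζ i))) (fun h => ρ' (fun i => h (ζ i))) u hu') ∘ₗ
          (chi ρ ζ).toLinearMap
  chi_gal : ∀ {I J : Type} {W : Type} [AddCommGroup W] [Module E W]
      (ρ : (I → G) → Module.End E W) (ζ : I → J) (γJ : J → Γ),
      (chi ρ ζ).toLinearMap ∘ₗ gal ρ (fun i => γJ (ζ i)) =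
        gal (fun h => ρ (fun i => h (ζ i))) γJ ∘ₗ (chi ρ ζ).toLinearMap
  chi_comp : ∀ {I J K : Type} {W : Type} [AddCommGroup W] [Module E W]
      (ρ : (I → G) → Module.End E W) (ζ : I → J) (η : J → K),
      (chi ρ (fun i => η (ζ i))).toLinearMap =
        (chi (fun h => ρ (fun i => h (ζ i))) η).toLinearMap ∘ₗ (chi ρ ζ).toLinearMap

variable {E : Type} [Field E] {G : Type} [Group G] {Γ : Type} [Group Γ]

/-- The trivial representation `𝟏` of `Ĝ^I` on `E`. -/
def trivRep (E : Type) [Field E] (G : Type) [Group G] (I : Type) :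
    (I → G) → Module.End E E := fun _ => LinearMap.id

/-- The representation `W^{ζ_I}` of `Ĝ` (indexed by the one-element set) obtained by
restricting a representation `ρ` of `Ĝ^I` along the diagonal. -/
def diagRep {I W : Type} [AddCommGroup W] [Module E W]
    (ρ : (I → G) → Module.End E W) : (PUnit → G) → Module.End E W :=
  fun h => ρ (fun _ => h PUnit.unit)

/-- The excursion operator `S_{I,W,x,ξ,(γ_i)}` on `H_{{0},𝟏}`: the composite
`H(x)`, `χ_{ζ_I}⁻¹`, `(γ_i)_{i∈I}`, `χ_{ζ_I}`, `H(ξ)`. -/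
def excursionOp (D : ExcursionData E G Γ) (I : Type) (W : Type) [AddCommGroup W] [Module E W]
    (ρ : (I → G) → Module.End E W) (xm : E →ₗ[E] W) (ξm : W →ₗ[E] E)
    (hx : ∀ h : PUnit → G, xm ∘ₗ trivRep E G PUnit h = diagRep ρ h ∘ₗ xm)
    (hξ : ∀ h : PUnit → G, ξm ∘ₗ diagRep ρ h = trivRep E G PUnit h ∘ₗ ξm)
    (γ : I → Γ) :
    (D.H PUnit E (trivRep E G PUnit)) →ₗ[E] (D.H PUnit E (trivRep E G PUnit)) :=
  (D.map (diagRep ρ) (trivRep E G PUnit) ξm hξ) ∘ₗ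
    (D.chi ρ (fun _ : I => PUnit.unit)).toLinearMap ∘ₗ
      (D.gal ρ γ) ∘ₗ
        (D.chi ρ (fun _ : I => PUnit.unit)).symm.toLinearMap ∘ₗ
          (D.map (trivRep E G PUnit) (diagRep ρ) xm hx)

/-- The external tensor product `W₁ ⊠ W₂` as a representation of `Ĝ^{I₁ ∪ I₂}`. -/
noncomputable def extTensorRep {I₁ I₂ W₁ W₂ : Type} [AddCommGroup W₁] [Module E W₁]
    [AddCommGroup W₂] [Module E W₂]
    (ρ₁ : (I₁ → G) → Module.End E W₁) (ρ₂ : (I₂ → G) → Module.End E W₂) :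
    (I₁ ⊕ I₂ → G) → Module.End E (W₁ ⊗[E] W₂) :=
  fun g => TensorProduct.map (ρ₁ (fun i => g (Sum.inl i))) (ρ₂ (fun i => g (Sum.inr i)))

/-- The vector `x₁ ⊗ x₂` as a morphism `𝟏 → W₁ ⊠ W₂`. -/
noncomputable def tensorVec {W₁ W₂ : Type} [AddCommGroup W₁] [Module E W₁]
    [AddCommGroup W₂] [Module E W₂] (x₁ : E →ₗ[E] W₁) (x₂ : E →ₗ[E] W₂) :
    E →ₗ[E] W₁ ⊗[E] W₂ :=
  TensorProduct.map x₁ x₂ ∘ₗ (TensorProduct.lid E E).symm.toLinearMap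

/-- The form `ξ₁ ⊗ ξ₂` as a morphism `W₁ ⊠ W₂ → 𝟏`. -/
noncomputable def tensorForm {W₁ W₂ : Type} [AddCommGroup W₁] [Module E W₁]
    [AddCommGroup W₂] [Module E W₂] (ξ₁ : W₁ →ₗ[E] E) (ξ₂ : W₂ →ₗ[E] E) :
    W₁ ⊗[E] W₂ →ₗ[E] E :=
  (TensorProduct.lid E E).toLinearMap ∘ₗ TensorProduct.map ξ₁ ξ₂


section ProductHelpers

variable {E : Type} [Field E] {G : Type} [Group G] {Γ : Type} [Group Γ]

/-- `map` only depends on the underlying linear map (proof irrelevance). -/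
theorem ExcursionData.map_congr (D : ExcursionData E G Γ) {I W W' : Type}
    [AddCommGroup W] [Module E W] [AddCommGroup W'] [Module E W']
    (ρ : (I → G) → Module.End E W) (ρ' : (I → G) → Module.End E W')
    {u u' : W →ₗ[E] W'} (h : u = u')
    (hu : ∀ g : I → G, u ∘ₗ ρ g = ρ' g ∘ₗ u)
    (hu' : ∀ g : I → G, u' ∘ₗ ρ g = ρ' g ∘ₗ u') :
    D.map ρ ρ' u hu = D.map ρ ρ' u' hu' := by
  subst h; rfl

/-- symm of a composition of linear equivalences, from an equation of linear maps. -/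
theorem linEquiv_symm_comp_of {E : Type} [Field E] {A B C : Type} [AddCommGroup A] [Module E A]
    [AddCommGroup B] [Module E B] [AddCommGroup C] [Module E C]
    (e : A ≃ₗ[E] C) (f : A ≃ₗ[E] B) (g : B ≃ₗ[E] C)
    (h : e.toLinearMap = g.toLinearMap ∘ₗ f.toLinearMap) :
    e.symm.toLinearMap = f.symm.toLinearMap ∘ₗ g.symm.toLinearMap := by
  ext x
  apply e.injective
  have h' := LinearMap.congr_fun h (f.symm (g.symm x))
  simp only [LinearMap.comp_apply, LinearEquiv.coe_coe] at h' ⊢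
  rw [e.apply_symm_apply, h', f.apply_symm_apply, g.apply_symm_apply]

/-- Conjugated Galois operator `χ ∘ γ ∘ χ⁻¹` at the coalesced level. -/
noncomputable def ExcursionData.conj (D : ExcursionData E G Γ) {I V : Type}
    [AddCommGroup V] [Module E V] (σ : (I → G) → Module.End E V) (γ : I → Γ) :
    (D.H PUnit V (fun h => σ (fun _ => h PUnit.unit))) →ₗ[E]
      (D.H PUnit V (fun h => σ (fun _ => h PUnit.unit))) :=
  (D.chi σ (fun _ => PUnit.unit)).toLinearMap ∘ₗ D.gal σ γ ∘ₗ
    (D.chi σ (fun _ => PUnit.unit)).symm.toLinearMap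

theorem ExcursionData.conj_mul (D : ExcursionData E G Γ) {I V : Type}
    [AddCommGroup V] [Module E V] (σ : (I → G) → Module.End E V) (γ γ' : I → Γ) :
    D.conj σ (γ * γ') = D.conj σ γ ∘ₗ D.conj σ γ' := by
  unfold ExcursionData.conj
  rw [D.gal_mul]
  ext x
  simp only [LinearMap.comp_apply, LinearEquiv.coe_coe, LinearEquiv.symm_apply_apply]

theorem ExcursionData.conj_reindex (D : ExcursionData E G Γ) {I J V : Type}
    [AddCommGroup V] [Module E V] (σ : (I → G) → Module.End E V) (ζ : I → J) (γJ : J → Γ) :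
    D.conj σ (fun i => γJ (ζ i)) = D.conj (fun h => σ (fun i => h (ζ i))) γJ := by
  have hc : (D.chi σ (fun _ : I => PUnit.unit)).toLinearMap =
      (D.chi (fun h => σ (fun i => h (ζ i))) (fun _ : J => PUnit.unit)).toLinearMap ∘ₗ
        (D.chi σ ζ).toLinearMap := D.chi_comp σ ζ (fun _ => PUnit.unit)
  have hcs : (D.chi σ (fun _ : I => PUnit.unit)).symm.toLinearMap =
      (D.chi σ ζ).symm.toLinearMap ∘ₗ
        (D.chi (fun h => σ (fun i => h (ζ i))) (fun _ : J => PUnit.unit)).symm.toLinearMap :=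
by
    ext x
    apply (D.chi σ (fun _ : I => PUnit.unit)).injective
    have h' := LinearMap.congr_fun hc
      ((D.chi σ ζ).symm ((D.chi (fun h => σ (fun i => h (ζ i))) (fun _ : J => PUnit.unit)).symm x))
    simp only [LinearMap.comp_apply, LinearEquiv.coe_coe] at h' ⊢
    rw [(D.chi σ (fun _ : I => PUnit.unit)).apply_symm_apply, h',
      (D.chi σ ζ).apply_symm_apply,
      (D.chi (fun h => σ (fun i => h (ζ i))) (fun _ : J => PUnit.unit)).apply_symm_apply]
  have hg := D.chi_gal σ ζ γJ
  unfold ExcursionData.conj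
  rw [hc, hcs]
  ext x
  have hg' := LinearMap.congr_fun hg
      ((D.chi σ ζ).symm ((D.chi (fun h => σ (fun i => h (ζ i))) (fun _ : J => PUnit.unit)).symm x))
  simp only [LinearMap.comp_apply, LinearEquiv.coe_coe] at hg' ⊢
  rw [hg', (D.chi σ ζ).apply_symm_apply]

theorem ExcursionData.conj_map (D : ExcursionData E G Γ) {J V V' : Type}
    [AddCommGroup V] [Module E V] [AddCommGroup V'] [Module E V']
    (σ : (J → G) → Module.End E V) (σ' : (J → G) → Module.End E V')
    (u : V →ₗ[E] V') (hu : ∀ h : J → G, u ∘ₗ σ h = σ' h ∘ₗ u)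
    (hud : ∀ h : PUnit → G,
      u ∘ₗ σ (fun _ => h PUnit.unit) = σ' (fun _ => h PUnit.unit) ∘ₗ u) (γJ : J → Γ) :
    D.conj σ' γJ ∘ₗ
        D.map (fun h : PUnit → G => σ (fun _ => h PUnit.unit))
          (fun h : PUnit → G => σ' (fun _ => h PUnit.unit)) u hud =
      D.map (fun h : PUnit → G => σ (fun _ => h PUnit.unit))
          (fun h : PUnit → G => σ' (fun _ => h PUnit.unit)) u hud ∘ₗ
        D.conj σ γJ := by
  have hcm : (D.chi σ' (fun _ : J => PUnit.unit)).toLinearMap ∘ₗ D.map σ σ' u hu =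
      (D.map (fun h : PUnit → G => σ (fun _ => h PUnit.unit))
          (fun h : PUnit → G => σ' (fun _ => h PUnit.unit)) u hud) ∘ₗ
        (D.chi σ (fun _ : J => PUnit.unit)).toLinearMap :=
    D.chi_map σ σ' (fun _ => PUnit.unit) u hu hud
  have hmg := D.map_gal σ σ' u hu γJ
  unfold ExcursionData.conj
  ext x
  simp only [LinearMap.comp_apply, LinearEquiv.coe_coe]
  -- compute χ'⁻¹ (M x) = mapJ (χ⁻¹ x)
  have hx : (D.chi σ' (fun _ : J => PUnit.unit)).symm
      ((D.map (fun h : PUnit → G => σ (fun _ => h PUnit.unit))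
          (fun h : PUnit → G => σ' (fun _ => h PUnit.unit)) u hud) x) =
      D.map σ σ' u hu ((D.chi σ (fun _ : J => PUnit.unit)).symm x) := by
    apply (D.chi σ' (fun _ : J => PUnit.unit)).injective
    have := LinearMap.congr_fun hcm ((D.chi σ (fun _ : J => PUnit.unit)).symm x)
    simp only [LinearMap.comp_apply, LinearEquiv.coe_coe] at this
    rw [(D.chi σ' (fun _ : J => PUnit.unit)).apply_symm_apply, this,
      (D.chi σ (fun _ : J => PUnit.unit)).apply_symm_apply]
  rw [hx]
  have hmg' := LinearMap.congr_fun hmg ((D.chi σ (fun _ : J => PUnit.unit)).symm x)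
  simp only [LinearMap.comp_apply] at hmg'
  rw [← hmg']
  have := LinearMap.congr_fun hcm
      (D.gal σ γJ ((D.chi σ (fun _ : J => PUnit.unit)).symm x))
  simp only [LinearMap.comp_apply, LinearEquiv.coe_coe] at this
  rw [this]

end ProductHelpers
section TensorHelpers

variable {E : Type} [Field E] {G : Type} [Group G] {Γ : Type} [Group Γ]
variable {W₁ W₂ : Type} [AddCommGroup W₁] [Module E W₁] [AddCommGroup W₂] [Module E W₂]

theorem comp_inter {A B C : Type} [AddCommGroup A] [Module E A] [AddCommGroup B] [Module E B]
    [AddCommGroup C] [Module E C]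
    {α : Module.End E A} {β : Module.End E B} {δ : Module.End E C}
    {f : A →ₗ[E] B} {g : B →ₗ[E] C}
    (hf : f ∘ₗ α = β ∘ₗ f) (hg : g ∘ₗ β = δ ∘ₗ g) :
    (g ∘ₗ f) ∘ₗ α = δ ∘ₗ (g ∘ₗ f) := by
  rw [LinearMap.comp_assoc, hf, ← LinearMap.comp_assoc, hg, LinearMap.comp_assoc]

theorem comp_reassoc {A B B' C X : Type*} [AddCommGroup A] [Module E A] [AddCommGroup B]
    [Module E B] [AddCommGroup B'] [Module E B'] [AddCommGroup C] [Module E C]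
    [AddCommGroup X] [Module E X]
    {f : B →ₗ[E] C} {g : A →ₗ[E] B} {f' : B' →ₗ[E] C} {g' : A →ₗ[E] B'}
    (h : f ∘ₗ g = f' ∘ₗ g') (k : X →ₗ[E] A) :
    f ∘ₗ (g ∘ₗ k) = f' ∘ₗ (g' ∘ₗ k) := by
  rw [← LinearMap.comp_assoc, h, LinearMap.comp_assoc]

/-- `x₁ ⊗ id : W₂ → W₁ ⊗ W₂`. -/
noncomputable def insL (x₁ : E →ₗ[E] W₁) : W₂ →ₗ[E] W₁ ⊗[E] W₂ :=
  TensorProduct.map x₁ LinearMap.id ∘ₗ (TensorProduct.lid E W₂).symm.toLinearMap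

/-- `id ⊗ x₂ : W₁ → W₁ ⊗ W₂`. -/
noncomputable def insR (x₂ : E →ₗ[E] W₂) : W₁ →ₗ[E] W₁ ⊗[E] W₂ :=
  TensorProduct.map LinearMap.id x₂ ∘ₗ (TensorProduct.rid E W₁).symm.toLinearMap

/-- `id ⊗ ξ₂ : W₁ ⊗ W₂ → W₁`. -/
noncomputable def prR (ξ₂ : W₂ →ₗ[E] E) : W₁ ⊗[E] W₂ →ₗ[E] W₁ :=
  (TensorProduct.rid E W₁).toLinearMap ∘ₗ TensorProduct.map LinearMap.id ξ₂

/-- `ξ₁ ⊗ id : W₁ ⊗ W₂ → W₂`. -/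
noncomputable def prL (ξ₁ : W₁ →ₗ[E] E) : W₁ ⊗[E] W₂ →ₗ[E] W₂ :=
  (TensorProduct.lid E W₂).toLinearMap ∘ₗ TensorProduct.map ξ₁ LinearMap.id

@[simp] theorem insL_apply (x₁ : E →ₗ[E] W₁) (w : W₂) :
    insL x₁ w = x₁ 1 ⊗ₜ[E] w := by simp [insL]

@[simp] theorem insR_apply (x₂ : E →ₗ[E] W₂) (w : W₁) :
    insR x₂ w = w ⊗ₜ[E] x₂ 1 := by simp [insR]

@[simp] theorem prR_apply (ξ₂ : W₂ →ₗ[E] E) (w₁ : W₁) (w₂ : W₂) :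
    prR ξ₂ (w₁ ⊗ₜ[E] w₂) = ξ₂ w₂ • w₁ := by simp [prR]

@[simp] theorem prL_apply (ξ₁ : W₁ →ₗ[E] E) (w₁ : W₁) (w₂ : W₂) :
    prL ξ₁ (w₁ ⊗ₜ[E] w₂) = ξ₁ w₁ • w₂ := by simp [prL]

theorem tensorVec_eq_insL (x₁ : E →ₗ[E] W₁) (x₂ : E →ₗ[E] W₂) :
    tensorVec x₁ x₂ = insL x₁ ∘ₗ x₂ := by
  apply LinearMap.ext; intro c
  simp [tensorVec]

theorem tensorVec_eq_insR (x₁ : E →ₗ[E] W₁) (x₂ : E →ₗ[E] W₂) :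
    tensorVec x₁ x₂ = insR x₂ ∘ₗ x₁ := by
  apply LinearMap.ext; intro c
  have h₁ : x₁ c = c • x₁ 1 := by rw [← map_smul, smul_eq_mul, mul_one]
  have h₂ : x₂ c = c • x₂ 1 := by rw [← map_smul, smul_eq_mul, mul_one]
  simp [tensorVec, h₁, h₂, TensorProduct.tmul_smul, TensorProduct.smul_tmul']

theorem tensorForm_eq_prR (ξ₁ : W₁ →ₗ[E] E) (ξ₂ : W₂ →ₗ[E] E) :
    tensorForm ξ₁ ξ₂ = ξ₁ ∘ₗ prR ξ₂ := by
  apply TensorProduct.ext'; intro w₁ w₂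
  simp [tensorForm, smul_eq_mul, mul_comm]

theorem tensorForm_eq_prL (ξ₁ : W₁ →ₗ[E] E) (ξ₂ : W₂ →ₗ[E] E) :
    tensorForm ξ₁ ξ₂ = ξ₂ ∘ₗ prL ξ₁ := by
  apply TensorProduct.ext'; intro w₁ w₂
  simp [tensorForm, smul_eq_mul, mul_comm]

theorem prR_comp_insL (x₁ : E →ₗ[E] W₁) (ξ₂ : W₂ →ₗ[E] E) :
    prR ξ₂ ∘ₗ insL x₁ = x₁ ∘ₗ ξ₂ := by
  apply LinearMap.ext; intro w
  have : x₁ (ξ₂ w) = ξ₂ w • x₁ 1 := by rw [← map_smul, smul_eq_mul, mul_one]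
  simp [this]

theorem prL_comp_insR (x₂ : E →ₗ[E] W₂) (ξ₁ : W₁ →ₗ[E] E) :
    prL ξ₁ ∘ₗ insR x₂ = x₂ ∘ₗ ξ₁ := by
  apply LinearMap.ext; intro w
  have : x₂ (ξ₁ w) = ξ₁ w • x₂ 1 := by rw [← map_smul, smul_eq_mul, mul_one]
  simp [this]

variable {I₁ I₂ : Type}

theorem insL_inter (ρ₁ : (I₁ → G) → Module.End E W₁) (ρ₂ : (I₂ → G) → Module.End E W₂)
    (x₁ : E →ₗ[E] W₁) (g₁ : I₁ → G) (g₂ : I₂ → G) (hfix : ρ₁ g₁ (x₁ 1) = x₁ 1) :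
    insL x₁ ∘ₗ ρ₂ g₂ = TensorProduct.map (ρ₁ g₁) (ρ₂ g₂) ∘ₗ insL x₁ := by
  apply LinearMap.ext; intro w
  simp [hfix]

theorem insR_inter (ρ₁ : (I₁ → G) → Module.End E W₁) (ρ₂ : (I₂ → G) → Module.End E W₂)
    (x₂ : E →ₗ[E] W₂) (g₁ : I₁ → G) (g₂ : I₂ → G) (hfix : ρ₂ g₂ (x₂ 1) = x₂ 1) :
    insR x₂ ∘ₗ ρ₁ g₁ = TensorProduct.map (ρ₁ g₁) (ρ₂ g₂) ∘ₗ insR x₂ := by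
  apply LinearMap.ext; intro w
  simp [hfix]

theorem prR_inter (ρ₁ : (I₁ → G) → Module.End E W₁) (ρ₂ : (I₂ → G) → Module.End E W₂)
    (ξ₂ : W₂ →ₗ[E] E) (g₁ : I₁ → G) (g₂ : I₂ → G) (hkill : ∀ w, ξ₂ (ρ₂ g₂ w) = ξ₂ w) :
    prR ξ₂ ∘ₗ TensorProduct.map (ρ₁ g₁) (ρ₂ g₂) = ρ₁ g₁ ∘ₗ prR ξ₂ := by
  apply TensorProduct.ext'; intro w₁ w₂
  simp [hkill]

theorem prL_inter (ρ₁ : (I₁ → G) → Module.End E W₁) (ρ₂ : (I₂ → G) → Module.End E W₂)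
    (ξ₁ : W₁ →ₗ[E] E) (g₁ : I₁ → G) (g₂ : I₂ → G) (hkill : ∀ w, ξ₁ (ρ₁ g₁ w) = ξ₁ w) :
    prL ξ₁ ∘ₗ TensorProduct.map (ρ₁ g₁) (ρ₂ g₂) = ρ₂ g₂ ∘ₗ prL ξ₁ := by
  apply TensorProduct.ext'; intro w₁ w₂
  simp [hkill]

/-- collapse the left summand. -/
def toR (I₁ I₂ : Type) : I₁ ⊕ I₂ → PUnit ⊕ I₂ := Sum.elim (fun _ => Sum.inl PUnit.unit) Sum.inr

/-- collapse the right summand. -/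
def toL (I₁ I₂ : Type) : I₁ ⊕ I₂ → I₁ ⊕ PUnit := Sum.elim Sum.inl (fun _ => Sum.inr PUnit.unit)

/-- extend by `1` on the right. -/
def padR (γ₁ : I₁ → Γ) : I₁ ⊕ PUnit → Γ := Sum.elim γ₁ (fun _ => 1)

/-- extend by `1` on the left. -/
def padL (γ₂ : I₂ → Γ) : PUnit ⊕ I₂ → Γ := Sum.elim (fun _ => 1) γ₂

end TensorHelpers
/-- **Product relation for excursion operators** (relation (SIW-p2)):
`S_{I₁∪I₂, W₁⊠W₂, x₁⊗x₂, ξ₁⊗ξ₂, (γ¹)×(γ²)} = S_{I₁,W₁,x₁,ξ₁,(γ¹)} ∘ S_{I₂,W₂,x₂,ξ₂,(γ²)}`;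
in particular excursion operators pairwise commute, so they generate a commutative
subalgebra of `End(H_{{0},𝟏})`. -/
theorem excursion_product (D : ExcursionData E G Γ) (I₁ I₂ : Type)
    (W₁ W₂ : Type) [AddCommGroup W₁] [Module E W₁] [AddCommGroup W₂] [Module E W₂]
    (ρ₁ : (I₁ → G) → Module.End E W₁) (ρ₂ : (I₂ → G) → Module.End E W₂)
    (x₁ : E →ₗ[E] W₁) (ξ₁ : W₁ →ₗ[E] E) (x₂ : E →ₗ[E] W₂) (ξ₂ : W₂ →ₗ[E] E)
    (hx₁ : ∀ h : PUnit → G, x₁ ∘ₗ trivRep E G PUnit h = diagRep ρ₁ h ∘ₗ x₁)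
    (hξ₁ : ∀ h : PUnit → G, ξ₁ ∘ₗ diagRep ρ₁ h = trivRep E G PUnit h ∘ₗ ξ₁)
    (hx₂ : ∀ h : PUnit → G, x₂ ∘ₗ trivRep E G PUnit h = diagRep ρ₂ h ∘ₗ x₂)
    (hξ₂ : ∀ h : PUnit → G, ξ₂ ∘ₗ diagRep ρ₂ h = trivRep E G PUnit h ∘ₗ ξ₂)
    (hxt : ∀ h : PUnit → G, tensorVec x₁ x₂ ∘ₗ trivRep E G PUnit h =
      diagRep (extTensorRep ρ₁ ρ₂) h ∘ₗ tensorVec x₁ x₂)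
    (hξt : ∀ h : PUnit → G, tensorForm ξ₁ ξ₂ ∘ₗ diagRep (extTensorRep ρ₁ ρ₂) h =
      trivRep E G PUnit h ∘ₗ tensorForm ξ₁ ξ₂)
    (γ₁ : I₁ → Γ) (γ₂ : I₂ → Γ) :
    excursionOp D (I₁ ⊕ I₂) (W₁ ⊗[E] W₂) (extTensorRep ρ₁ ρ₂)
        (tensorVec x₁ x₂) (tensorForm ξ₁ ξ₂) hxt hξt (Sum.elim γ₁ γ₂) =
      excursionOp D I₁ W₁ ρ₁ x₁ ξ₁ hx₁ hξ₁ γ₁ ∘ₗ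
        excursionOp D I₂ W₂ ρ₂ x₂ ξ₂ hx₂ hξ₂ γ₂ ∧
    excursionOp D I₁ W₁ ρ₁ x₁ ξ₁ hx₁ hξ₁ γ₁ ∘ₗ
        excursionOp D I₂ W₂ ρ₂ x₂ ξ₂ hx₂ hξ₂ γ₂ =
      excursionOp D I₂ W₂ ρ₂ x₂ ξ₂ hx₂ hξ₂ γ₂ ∘ₗ
        excursionOp D I₁ W₁ ρ₁ x₁ ξ₁ hx₁ hξ₁ γ₁ := by
  -- fixed vectors and invariant forms
  have hfix₁ : ∀ g : G, ρ₁ (fun _ => g) (x₁ 1) = x₁ 1 :=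
    fun g => (LinearMap.congr_fun (hx₁ (fun _ => g)) 1).symm
  have hfix₂ : ∀ g : G, ρ₂ (fun _ => g) (x₂ 1) = x₂ 1 :=
    fun g => (LinearMap.congr_fun (hx₂ (fun _ => g)) 1).symm
  have hkill₁ : ∀ (g : G) (w : W₁), ξ₁ (ρ₁ (fun _ => g) w) = ξ₁ w :=
    fun g w => LinearMap.congr_fun (hξ₁ (fun _ => g)) w
  have hkill₂ : ∀ (g : G) (w : W₂), ξ₂ (ρ₂ (fun _ => g) w) = ξ₂ w :=
    fun g w => LinearMap.congr_fun (hξ₂ (fun _ => g)) w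
  -- equivariance of the four partial creation/annihilation operators
  have hu : ∀ h : PUnit ⊕ I₂ → G,
      insL (W₂ := W₂) x₁ ∘ₗ ρ₂ (fun i => h (Sum.inr i)) =
        extTensorRep ρ₁ ρ₂ (fun k => h (toR I₁ I₂ k)) ∘ₗ insL x₁ :=
    fun h => insL_inter ρ₁ ρ₂ x₁ _ _ (hfix₁ (h (Sum.inl PUnit.unit)))
  have hv : ∀ h : I₁ ⊕ PUnit → G,
      prR (W₁ := W₁) ξ₂ ∘ₗ extTensorRep ρ₁ ρ₂ (fun k => h (toL I₁ I₂ k)) =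
        ρ₁ (fun i => h (Sum.inl i)) ∘ₗ prR ξ₂ :=
    fun h => prR_inter ρ₁ ρ₂ ξ₂ _ _ (fun w => hkill₂ (h (Sum.inr PUnit.unit)) w)
  have hu' : ∀ h : I₁ ⊕ PUnit → G,
      insR (W₁ := W₁) x₂ ∘ₗ ρ₁ (fun i => h (Sum.inl i)) =
        extTensorRep ρ₁ ρ₂ (fun k => h (toL I₁ I₂ k)) ∘ₗ insR x₂ :=
    fun h => insR_inter ρ₁ ρ₂ x₂ _ _ (hfix₂ (h (Sum.inr PUnit.unit)))
  have hv' : ∀ h : PUnit ⊕ I₂ → G,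
      prL (W₂ := W₂) ξ₁ ∘ₗ extTensorRep ρ₁ ρ₂ (fun k => h (toR I₁ I₂ k)) =
        ρ₂ (fun i => h (Sum.inr i)) ∘ₗ prL ξ₁ :=
    fun h => prL_inter ρ₁ ρ₂ ξ₁ _ _ (fun w => hkill₁ (h (Sum.inl PUnit.unit)) w)
  -- their coalescences to the one-point level
  have hud : ∀ h : PUnit → G,
      insL (W₂ := W₂) x₁ ∘ₗ diagRep ρ₂ h = diagRep (extTensorRep ρ₁ ρ₂) h ∘ₗ insL x₁ :=
    fun h => hu (fun _ => h PUnit.unit)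
  have hvd : ∀ h : PUnit → G,
      prR (W₁ := W₁) ξ₂ ∘ₗ diagRep (extTensorRep ρ₁ ρ₂) h = diagRep ρ₁ h ∘ₗ prR ξ₂ :=
    fun h => hv (fun _ => h PUnit.unit)
  have hu'd : ∀ h : PUnit → G,
      insR (W₁ := W₁) x₂ ∘ₗ diagRep ρ₁ h = diagRep (extTensorRep ρ₁ ρ₂) h ∘ₗ insR x₂ :=
    fun h => hu' (fun _ => h PUnit.unit)
  have hv'd : ∀ h : PUnit → G,
      prL (W₂ := W₂) ξ₁ ∘ₗ diagRep (extTensorRep ρ₁ ρ₂) h = diagRep ρ₂ h ∘ₗ prL ξ₁ :=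
    fun h => hv' (fun _ => h PUnit.unit)
  -- equivariance of composites
  have h1a : ∀ h : PUnit → G,
      (insL (W₂ := W₂) x₁ ∘ₗ x₂) ∘ₗ trivRep E G PUnit h =
        diagRep (extTensorRep ρ₁ ρ₂) h ∘ₗ (insL x₁ ∘ₗ x₂) :=
    fun h => comp_inter (hx₂ h) (hud h)
  have h1a' : ∀ h : PUnit → G,
      (insR (W₁ := W₁) x₂ ∘ₗ x₁) ∘ₗ trivRep E G PUnit h =
        diagRep (extTensorRep ρ₁ ρ₂) h ∘ₗ (insR x₂ ∘ₗ x₁) :=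
    fun h => comp_inter (hx₁ h) (hu'd h)
  have h2a : ∀ h : PUnit → G,
      (ξ₁ ∘ₗ prR (W₁ := W₁) ξ₂) ∘ₗ diagRep (extTensorRep ρ₁ ρ₂) h =
        trivRep E G PUnit h ∘ₗ (ξ₁ ∘ₗ prR ξ₂) :=
    fun h => comp_inter (hvd h) (hξ₁ h)
  have h2a' : ∀ h : PUnit → G,
      (ξ₂ ∘ₗ prL (W₂ := W₂) ξ₁) ∘ₗ diagRep (extTensorRep ρ₁ ρ₂) h =
        trivRep E G PUnit h ∘ₗ (ξ₂ ∘ₗ prL ξ₁) :=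
    fun h => comp_inter (hv'd h) (hξ₂ h)
  have h3a : ∀ h : PUnit → G,
      (prR (W₁ := W₁) ξ₂ ∘ₗ insL (W₂ := W₂) x₁) ∘ₗ diagRep ρ₂ h =
        diagRep ρ₁ h ∘ₗ (prR ξ₂ ∘ₗ insL x₁) :=
    fun h => comp_inter (hud h) (hvd h)
  have h3b : ∀ h : PUnit → G,
      (x₁ ∘ₗ ξ₂) ∘ₗ diagRep ρ₂ h = diagRep ρ₁ h ∘ₗ (x₁ ∘ₗ ξ₂) :=
    fun h => comp_inter (hξ₂ h) (hx₁ h)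
  have h3a' : ∀ h : PUnit → G,
      (prL (W₂ := W₂) ξ₁ ∘ₗ insR (W₁ := W₁) x₂) ∘ₗ diagRep ρ₁ h =
        diagRep ρ₂ h ∘ₗ (prL ξ₁ ∘ₗ insR x₂) :=
    fun h => comp_inter (hu'd h) (hv'd h)
  have h3b' : ∀ h : PUnit → G,
      (x₂ ∘ₗ ξ₁) ∘ₗ diagRep ρ₁ h = diagRep ρ₂ h ∘ₗ (x₂ ∘ₗ ξ₁) :=
    fun h => comp_inter (hξ₁ h) (hx₂ h)
  -- decomposition of creation operators
  have E1 : D.map (trivRep E G PUnit) (diagRep (extTensorRep ρ₁ ρ₂)) (tensorVec x₁ x₂) hxt =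
      D.map (diagRep ρ₂) (diagRep (extTensorRep ρ₁ ρ₂)) (insL x₁) hud ∘ₗ
        D.map (trivRep E G PUnit) (diagRep ρ₂) x₂ hx₂ :=
    (D.map_congr _ _ (tensorVec_eq_insL x₁ x₂) hxt h1a).trans
      (D.map_comp (trivRep E G PUnit) (diagRep ρ₂) (diagRep (extTensorRep ρ₁ ρ₂))
        x₂ (insL x₁) hx₂ hud h1a)
  have E1' : D.map (trivRep E G PUnit) (diagRep (extTensorRep ρ₁ ρ₂)) (tensorVec x₁ x₂) hxt =
      D.map (diagRep ρ₁) (diagRep (extTensorRep ρ₁ ρ₂)) (insR x₂) hu'd ∘ₗ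
        D.map (trivRep E G PUnit) (diagRep ρ₁) x₁ hx₁ :=
    (D.map_congr _ _ (tensorVec_eq_insR x₁ x₂) hxt h1a').trans
      (D.map_comp (trivRep E G PUnit) (diagRep ρ₁) (diagRep (extTensorRep ρ₁ ρ₂))
        x₁ (insR x₂) hx₁ hu'd h1a')
  -- decomposition of annihilation operators
  have E2 : D.map (diagRep (extTensorRep ρ₁ ρ₂)) (trivRep E G PUnit) (tensorForm ξ₁ ξ₂) hξt =
      D.map (diagRep ρ₁) (trivRep E G PUnit) ξ₁ hξ₁ ∘ₗ
        D.map (diagRep (extTensorRep ρ₁ ρ₂)) (diagRep ρ₁) (prR ξ₂) hvd :=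
    (D.map_congr _ _ (tensorForm_eq_prR ξ₁ ξ₂) hξt h2a).trans
      (D.map_comp (diagRep (extTensorRep ρ₁ ρ₂)) (diagRep ρ₁) (trivRep E G PUnit)
        (prR ξ₂) ξ₁ hvd hξ₁ h2a)
  have E2' : D.map (diagRep (extTensorRep ρ₁ ρ₂)) (trivRep E G PUnit) (tensorForm ξ₁ ξ₂) hξt =
      D.map (diagRep ρ₂) (trivRep E G PUnit) ξ₂ hξ₂ ∘ₗ
        D.map (diagRep (extTensorRep ρ₁ ρ₂)) (diagRep ρ₂) (prL ξ₁) hv'd :=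
    (D.map_congr _ _ (tensorForm_eq_prL ξ₁ ξ₂) hξt h2a').trans
      (D.map_comp (diagRep (extTensorRep ρ₁ ρ₂)) (diagRep ρ₂) (trivRep E G PUnit)
        (prL ξ₁) ξ₂ hv'd hξ₂ h2a')
  -- the middle exchange
  have E3 : D.map (diagRep (extTensorRep ρ₁ ρ₂)) (diagRep ρ₁) (prR ξ₂) hvd ∘ₗ
        D.map (diagRep ρ₂) (diagRep (extTensorRep ρ₁ ρ₂)) (insL x₁) hud =
      D.map (trivRep E G PUnit) (diagRep ρ₁) x₁ hx₁ ∘ₗ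
        D.map (diagRep ρ₂) (trivRep E G PUnit) ξ₂ hξ₂ :=
    ((D.map_comp (diagRep ρ₂) (diagRep (extTensorRep ρ₁ ρ₂)) (diagRep ρ₁)
        (insL x₁) (prR ξ₂) hud hvd h3a).symm.trans
      (D.map_congr _ _ (prR_comp_insL x₁ ξ₂) h3a h3b)).trans
      (D.map_comp (diagRep ρ₂) (trivRep E G PUnit) (diagRep ρ₁) ξ₂ x₁ hξ₂ hx₁ h3b)
  have E3' : D.map (diagRep (extTensorRep ρ₁ ρ₂)) (diagRep ρ₂) (prL ξ₁) hv'd ∘ₗ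
        D.map (diagRep ρ₁) (diagRep (extTensorRep ρ₁ ρ₂)) (insR x₂) hu'd =
      D.map (trivRep E G PUnit) (diagRep ρ₂) x₂ hx₂ ∘ₗ
        D.map (diagRep ρ₁) (trivRep E G PUnit) ξ₁ hξ₁ :=
    ((D.map_comp (diagRep ρ₁) (diagRep (extTensorRep ρ₁ ρ₂)) (diagRep ρ₂)
        (insR x₂) (prL ξ₁) hu'd hv'd h3a').symm.trans
      (D.map_congr _ _ (prL_comp_insR x₂ ξ₁) h3a' h3b')).trans
      (D.map_comp (diagRep ρ₁) (trivRep E G PUnit) (diagRep ρ₂) ξ₁ x₂ hξ₁ hx₂ h3b')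
  -- commuting the conjugated Galois operators with creation/annihilation operators
  have cm₂ : D.conj (fun h => extTensorRep ρ₁ ρ₂ (fun k => h (toR I₁ I₂ k))) (padL γ₂) ∘ₗ
        D.map (diagRep ρ₂) (diagRep (extTensorRep ρ₁ ρ₂)) (insL x₁) hud =
      D.map (diagRep ρ₂) (diagRep (extTensorRep ρ₁ ρ₂)) (insL x₁) hud ∘ₗ
        D.conj (fun h => ρ₂ (fun i => h (Sum.inr i))) (padL γ₂) :=
    D.conj_map _ _ _ hu hud (padL γ₂)
  have cm₁ : D.conj (fun h => ρ₁ (fun i => h (Sum.inl i))) (padR γ₁) ∘ₗ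
        D.map (diagRep (extTensorRep ρ₁ ρ₂)) (diagRep ρ₁) (prR ξ₂) hvd =
      D.map (diagRep (extTensorRep ρ₁ ρ₂)) (diagRep ρ₁) (prR ξ₂) hvd ∘ₗ
        D.conj (fun h => extTensorRep ρ₁ ρ₂ (fun k => h (toL I₁ I₂ k))) (padR γ₁) :=
    D.conj_map _ _ _ hv hvd (padR γ₁)
  have cm₁' : D.conj (fun h => extTensorRep ρ₁ ρ₂ (fun k => h (toL I₁ I₂ k))) (padR γ₁) ∘ₗ
        D.map (diagRep ρ₁) (diagRep (extTensorRep ρ₁ ρ₂)) (insR x₂) hu'd =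
      D.map (diagRep ρ₁) (diagRep (extTensorRep ρ₁ ρ₂)) (insR x₂) hu'd ∘ₗ
        D.conj (fun h => ρ₁ (fun i => h (Sum.inl i))) (padR γ₁) :=
    D.conj_map _ _ _ hu' hu'd (padR γ₁)
  have cm₂' : D.conj (fun h => ρ₂ (fun i => h (Sum.inr i))) (padL γ₂) ∘ₗ
        D.map (diagRep (extTensorRep ρ₁ ρ₂)) (diagRep ρ₂) (prL ξ₁) hv'd =
      D.map (diagRep (extTensorRep ρ₁ ρ₂)) (diagRep ρ₂) (prL ξ₁) hv'd ∘ₗ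
        D.conj (fun h => extTensorRep ρ₁ ρ₂ (fun k => h (toR I₁ I₂ k))) (padL γ₂) :=
    D.conj_map _ _ _ hv' hv'd (padL γ₂)
  -- reindexing the conjugated Galois operators
  have rA : D.conj (extTensorRep ρ₁ ρ₂) (fun k => padR γ₁ (toL I₁ I₂ k)) =
      D.conj (fun h => extTensorRep ρ₁ ρ₂ (fun k => h (toL I₁ I₂ k))) (padR γ₁) :=
    D.conj_reindex _ _ _
  have rB : D.conj (extTensorRep ρ₁ ρ₂) (fun k => padL γ₂ (toR I₁ I₂ k)) =
      D.conj (fun h => extTensorRep ρ₁ ρ₂ (fun k => h (toR I₁ I₂ k))) (padL γ₂) :=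
    D.conj_reindex _ _ _
  have r₁ : D.conj ρ₁ γ₁ = D.conj (fun h => ρ₁ (fun i => h (Sum.inl i))) (padR γ₁) :=
    D.conj_reindex ρ₁ Sum.inl (padR γ₁)
  have r₂ : D.conj ρ₂ γ₂ = D.conj (fun h => ρ₂ (fun i => h (Sum.inr i))) (padL γ₂) :=
    D.conj_reindex ρ₂ Sum.inr (padL γ₂)
  -- factorizations of the Galois parameter
  have hγ : Sum.elim γ₁ γ₂ =
      (fun k => padR γ₁ (toL I₁ I₂ k)) * (fun k => padL γ₂ (toR I₁ I₂ k)) := by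
    funext k; cases k <;> simp [padR, padL, toL, toR]
  have hγ' : Sum.elim γ₁ γ₂ =
      (fun k => padL γ₂ (toR I₁ I₂ k)) * (fun k => padR γ₁ (toL I₁ I₂ k)) := by
    funext k; cases k <;> simp [padR, padL, toL, toR]
  -- the unfolded forms of the three excursion operators
  have hSbig : excursionOp D (I₁ ⊕ I₂) (W₁ ⊗[E] W₂) (extTensorRep ρ₁ ρ₂)
        (tensorVec x₁ x₂) (tensorForm ξ₁ ξ₂) hxt hξt (Sum.elim γ₁ γ₂) =
      D.map (diagRep (extTensorRep ρ₁ ρ₂)) (trivRep E G PUnit) (tensorForm ξ₁ ξ₂) hξt ∘ₗ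
        D.conj (extTensorRep ρ₁ ρ₂) (Sum.elim γ₁ γ₂) ∘ₗ
          D.map (trivRep E G PUnit) (diagRep (extTensorRep ρ₁ ρ₂)) (tensorVec x₁ x₂) hxt :=
    rfl
  have hS₁ : excursionOp D I₁ W₁ ρ₁ x₁ ξ₁ hx₁ hξ₁ γ₁ =
      D.map (diagRep ρ₁) (trivRep E G PUnit) ξ₁ hξ₁ ∘ₗ
        D.conj ρ₁ γ₁ ∘ₗ D.map (trivRep E G PUnit) (diagRep ρ₁) x₁ hx₁ := rfl
  have hS₂ : excursionOp D I₂ W₂ ρ₂ x₂ ξ₂ hx₂ hξ₂ γ₂ =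
      D.map (diagRep ρ₂) (trivRep E G PUnit) ξ₂ hξ₂ ∘ₗ
        D.conj ρ₂ γ₂ ∘ₗ D.map (trivRep E G PUnit) (diagRep ρ₂) x₂ hx₂ := rfl
  have main : excursionOp D (I₁ ⊕ I₂) (W₁ ⊗[E] W₂) (extTensorRep ρ₁ ρ₂)
        (tensorVec x₁ x₂) (tensorForm ξ₁ ξ₂) hxt hξt (Sum.elim γ₁ γ₂) =
      excursionOp D I₁ W₁ ρ₁ x₁ ξ₁ hx₁ hξ₁ γ₁ ∘ₗ
        excursionOp D I₂ W₂ ρ₂ x₂ ξ₂ hx₂ hξ₂ γ₂ := by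
    rw [hSbig, hS₁, hS₂, hγ, D.conj_mul, rA, rB, r₁, r₂, E1, E2]
    simp only [LinearMap.comp_assoc]
    erw [LinearMap.comp_assoc (h := D.conj (fun h => extTensorRep ρ₁ ρ₂ (fun k => h (toL I₁ I₂ k))) (padR γ₁))]
    erw [comp_reassoc cm₂ (D.map (trivRep E G PUnit) (diagRep ρ₂) x₂ hx₂),
      comp_reassoc cm₁.symm
        (D.map (diagRep ρ₂) (diagRep (extTensorRep ρ₁ ρ₂)) (insL x₁) hud ∘ₗ
          (D.conj (fun h => ρ₂ (fun i => h (Sum.inr i))) (padL γ₂) ∘ₗ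
            D.map (trivRep E G PUnit) (diagRep ρ₂) x₂ hx₂)),
      comp_reassoc E3
        (D.conj (fun h => ρ₂ (fun i => h (Sum.inr i))) (padL γ₂) ∘ₗ
          D.map (trivRep E G PUnit) (diagRep ρ₂) x₂ hx₂)]
    rfl
  have main' : excursionOp D (I₁ ⊕ I₂) (W₁ ⊗[E] W₂) (extTensorRep ρ₁ ρ₂)
        (tensorVec x₁ x₂) (tensorForm ξ₁ ξ₂) hxt hξt (Sum.elim γ₁ γ₂) =
      excursionOp D I₂ W₂ ρ₂ x₂ ξ₂ hx₂ hξ₂ γ₂ ∘ₗ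
        excursionOp D I₁ W₁ ρ₁ x₁ ξ₁ hx₁ hξ₁ γ₁ := by
    rw [hSbig, hS₁, hS₂, hγ', D.conj_mul, rA, rB, r₁, r₂, E1', E2']
    simp only [LinearMap.comp_assoc]
    erw [LinearMap.comp_assoc (h := D.conj (fun h => extTensorRep ρ₁ ρ₂ (fun k => h (toR I₁ I₂ k))) (padL γ₂))]
    erw [comp_reassoc cm₁' (D.map (trivRep E G PUnit) (diagRep ρ₁) x₁ hx₁),
      comp_reassoc cm₂'.symm
        (D.map (diagRep ρ₁) (diagRep (extTensorRep ρ₁ ρ₂)) (insR x₂) hu'd ∘ₗ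
          (D.conj (fun h => ρ₁ (fun i => h (Sum.inl i))) (padR γ₁) ∘ₗ
            D.map (trivRep E G PUnit) (diagRep ρ₁) x₁ hx₁)),
      comp_reassoc E3'
        (D.conj (fun h => ρ₁ (fun i => h (Sum.inl i))) (padR γ₁) ∘ₗ
          D.map (trivRep E G PUnit) (diagRep ρ₁) x₁ hx₁)]
    rfl
  exact ⟨main, main.symm.trans main'⟩
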